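/- Let X be a proper metric space with basepoint, let X̄ be its Higson compactification with canonical map ι : X → X̄, and let Z be a compact metric space. A continuous map f : X → Z admits a continuous extension over X̄, i.e. a continuous F : X̄ → Z with F ∘ ι = f, if and only if f has decaying variation, that is, for every R > 0 one has lim_{dist(x,x₀)→∞} diam f(B_R(x)) = 0. -/

import Mathlib

set_option maxHeartbeats 1000000


open Metric BoundedContinuousFunction
open Filter Topology

section Higson

variable {X : Type*} [MetricSpace X]

/-- A function on the pointed metric space `X` has decaying variation if the diameters of images
of `R`-balls tend to zero at infinity. -/
def HasDecayingVariation (x₀ : X) (f : X →ᵇ ℂ) : Prop :=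
  ∀ R : ℝ, 0 < R → ∀ ε : ℝ, 0 < ε → ∃ t : ℝ, 0 < t ∧ ∀ x : X, t ≤ dist x x₀ →
    EMetric.diam (⇑f '' closedBall x R) ≤ ENNReal.ofReal ε

/-- The Higson algebra: the closed star-subalgebra of `C_b(X, ℂ)` generated by the constants and
the bounded continuous functions of decaying variation. -/
noncomputable def higsonAlgebra (x₀ : X) : StarSubalgebra ℂ (X →ᵇ ℂ) :=
  (StarAlgebra.adjoin ℂ {f : X →ᵇ ℂ | HasDecayingVariation x₀ f}).topologicalClosure

/-- The Higson compactification: the character space (Gelfand spectrum) of the Higson algebra. -/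
def HigsonCompactification (x₀ : X) :=
  WeakDual.characterSpace ℂ ↥(higsonAlgebra x₀)

/-- Evaluation at a point of `X`, as a continuous linear functional on the Higson algebra. -/
noncomputable def higsonEvalCLM (x₀ x : X) : WeakDual ℂ ↥(higsonAlgebra x₀) :=
  { toFun := fun f => (f : X →ᵇ ℂ) x
    map_add' := fun _ _ => rfl
    map_smul' := fun _ _ => rfl
    cont := (lipschitz_eval_const x).continuous.comp continuous_subtype_val }

theorem higsonEvalCLM_mem (x₀ x : X) :
    higsonEvalCLM x₀ x ∈ WeakDual.characterSpace ℂ ↥(higsonAlgebra x₀) := by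
  constructor
  · intro h
    have h1 : higsonEvalCLM x₀ x (1 : ↥(higsonAlgebra x₀)) = 0 := by rw [h]; rfl
    exact one_ne_zero (α := ℂ) h1
  · intro f g
    rfl

/-- The canonical map `ι` from `X` to its Higson compactification, sending `x` to the evaluation
character. -/
noncomputable def higsonIota (x₀ : X) (x : X) : HigsonCompactification x₀ :=
  ⟨higsonEvalCLM x₀ x, higsonEvalCLM_mem x₀ x⟩

instance higsonComplete (x₀ : X) : CompleteSpace ↥(higsonAlgebra x₀) :=
  (StarAlgebra.adjoin ℂ {f : X →ᵇ ℂ | HasDecayingVariation x₀ f}).isClosed_topologicalClosure.completeSpace_coe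

instance higsonCompact (x₀ : X) : CompactSpace (HigsonCompactification x₀) :=
  inferInstanceAs (CompactSpace (WeakDual.characterSpace ℂ ↥(higsonAlgebra x₀)))


/-- slow oscillation at scale R -/
def SlowOsc (x₀ : X) (R : ℝ) (g : X →ᵇ ℂ) : Prop :=
  ∀ ε : ℝ, 0 < ε → ∃ t : ℝ, ∀ x y : X, t ≤ dist x x₀ → dist x y ≤ R → dist (g x) (g y) ≤ ε

noncomputable def slowOscAlg (x₀ : X) (R : ℝ) : StarSubalgebra ℂ (X →ᵇ ℂ) where
  carrier := {g | SlowOsc x₀ R g}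
  mul_mem' := by
    rintro g h hg hh ε hε
    set M : ℝ := ‖g‖ + ‖h‖ + 1 with hM
    have hM0 : 0 < M := by positivity
    obtain ⟨t₁, h₁⟩ := hg (ε / (2 * M)) (by positivity)
    obtain ⟨t₂, h₂⟩ := hh (ε / (2 * M)) (by positivity)
    refine ⟨max t₁ t₂, fun x y hx hxy => ?_⟩
    have e1 : dist (g x) (g y) ≤ ε / (2 * M) := h₁ x y (le_trans (le_max_left _ _) hx) hxy
    have e2 : dist (h x) (h y) ≤ ε / (2 * M) := h₂ x y (le_trans (le_max_right _ _) hx) hxy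
    have key : dist ((g * h) x) ((g * h) y) ≤ ‖g x‖ * dist (h x) (h y) + ‖h y‖ * dist (g x) (g y) := by
      simp only [BoundedContinuousFunction.coe_mul, Pi.mul_apply, dist_eq_norm]
      have : g x * h x - g y * h y = g x * (h x - h y) + (g x - g y) * h y := by ring
      rw [this]
      calc ‖g x * (h x - h y) + (g x - g y) * h y‖
          ≤ ‖g x * (h x - h y)‖ + ‖(g x - g y) * h y‖ := norm_add_le _ _
        _ = ‖g x‖ * ‖h x - h y‖ + ‖h y‖ * ‖g x - g y‖ := by rw [norm_mul, norm_mul]; ring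
    have bg : ‖g x‖ ≤ M := le_trans (norm_coe_le_norm g x) (by simp only [hM]; linarith [norm_nonneg h, norm_nonneg g])
    have bh : ‖h y‖ ≤ M := le_trans (norm_coe_le_norm h y) (by simp only [hM]; linarith [norm_nonneg h, norm_nonneg g])
    have : ‖g x‖ * dist (h x) (h y) + ‖h y‖ * dist (g x) (g y) ≤ M * (ε / (2 * M)) + M * (ε / (2 * M)) := by
      gcongr
    have hMε : M * (ε / (2 * M)) = ε / 2 := by field_simp
    calc dist ((g * h) x) ((g * h) y) ≤ _ := key
      _ ≤ M * (ε / (2 * M)) + M * (ε / (2 * M)) := this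
      _ = ε := by rw [hMε]; ring
  one_mem' := fun ε hε => ⟨0, fun x y _ _ => by simp [hε.le]⟩
  add_mem' := by
    rintro g h hg hh ε hε
    obtain ⟨t₁, h₁⟩ := hg (ε / 2) (by positivity)
    obtain ⟨t₂, h₂⟩ := hh (ε / 2) (by positivity)
    refine ⟨max t₁ t₂, fun x y hx hxy => ?_⟩
    have := dist_add_add_le (g x) (h x) (g y) (h y)
    have e1 := h₁ x y (le_trans (le_max_left _ _) hx) hxy
    have e2 := h₂ x y (le_trans (le_max_right _ _) hx) hxy
    calc dist ((g + h) x) ((g + h) y) = dist (g x + h x) (g y + h y) := rfl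
      _ ≤ dist (g x) (g y) + dist (h x) (h y) := dist_add_add_le _ _ _ _
      _ ≤ ε / 2 + ε / 2 := add_le_add e1 e2
      _ = ε := by ring
  zero_mem' := fun ε hε => ⟨0, fun x y _ _ => by simp [hε.le]⟩
  algebraMap_mem' := fun c ε hε => ⟨0, fun x y _ _ => by
    simp [hε.le]⟩
  star_mem' := by
    rintro g hg ε hε
    obtain ⟨t, h₁⟩ := hg ε hε
    refine ⟨t, fun x y hx hxy => ?_⟩
    have : dist ((star g) x) ((star g) y) = dist (g x) (g y) := by
      simp only [BoundedContinuousFunction.star_apply, dist_eq_norm, ← star_sub, norm_star]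
    rw [this]; exact h₁ x y hx hxy

lemma isClosed_slowOsc (x₀ : X) (R : ℝ) :
    IsClosed {g : X →ᵇ ℂ | SlowOsc x₀ R g} := by
  rw [← closure_subset_iff_isClosed]
  intro g hg ε hε
  obtain ⟨h, hhS, hgh⟩ := Metric.mem_closure_iff.mp hg (ε / 3) (by positivity)
  obtain ⟨t, ht⟩ := hhS (ε / 3) (by positivity)
  refine ⟨t, fun x y hx hxy => ?_⟩
  have h1 : dist (g x) (h x) ≤ ε / 3 := le_trans (dist_coe_le_dist x) hgh.le
  have h2 : dist (h y) (g y) ≤ ε / 3 := by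
    rw [dist_comm]; exact le_trans (dist_coe_le_dist y) hgh.le
  calc dist (g x) (g y) ≤ dist (g x) (h x) + dist (h x) (h y) + dist (h y) (g y) :=
        dist_triangle4 _ _ _ _
    _ ≤ ε / 3 + ε / 3 + ε / 3 := by
        exact add_le_add (add_le_add h1 (ht x y hx hxy)) h2
    _ = ε := by ring

lemma higson_slowOsc (x₀ : X) (R : ℝ) (hR : 0 < R) {g : X →ᵇ ℂ}
    (hg : g ∈ higsonAlgebra x₀) : SlowOsc x₀ R g := by
  have h1 : StarAlgebra.adjoin ℂ {f : X →ᵇ ℂ | HasDecayingVariation x₀ f} ≤ slowOscAlg x₀ R := by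
    apply StarAlgebra.adjoin_le
    intro f hf ε hε
    obtain ⟨t, ht, H⟩ := hf R hR ε hε
    refine ⟨t, fun x y hx hxy => ?_⟩
    have hx' : f x ∈ ⇑f '' closedBall x R := ⟨x, mem_closedBall_self hR.le, rfl⟩
    have hy' : f y ∈ ⇑f '' closedBall x R := ⟨y, by rwa [mem_closedBall, dist_comm], rfl⟩
    have := le_trans (EMetric.edist_le_diam_of_mem hx' hy') (H x hx)
    rwa [edist_dist, ENNReal.ofReal_le_ofReal_iff hε.le] at this
  exact StarSubalgebra.topologicalClosure_minimal h1 (isClosed_slowOsc x₀ R) hg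

end Higson

/-- a continuous map `f` from a proper metric space `X` to a compact metric space
`Z` extends continuously over the Higson compactification if and only if `f` has decaying
variation. -/
theorem stmt10 (X : Type*) [MetricSpace X] [ProperSpace X] (x₀ : X)
    (Z : Type*) [MetricSpace Z] [CompactSpace Z]
    (f : X → Z) (hf : Continuous f) :
    (∃ F : C(HigsonCompactification x₀, Z), ∀ x : X, F (higsonIota x₀ x) = f x) ↔
    (∀ R : ℝ, 0 < R → ∀ ε : ℝ, 0 < ε → ∃ t : ℝ, 0 < t ∧ ∀ x : X, t ≤ dist x x₀ →
      EMetric.diam (f '' closedBall x R) ≤ ENNReal.ofReal ε) := by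
  constructor
  · intro h
    obtain ⟨F, hF⟩ := h
    intro R hR ε hε
    by_contra hcon
    push_neg at hcon
    choose x hx hd using fun n : ℕ => hcon (n + 1) (by positivity)
    have key : ∀ n : ℕ, ∃ a b : X, a ∈ closedBall (x n) R ∧ b ∈ closedBall (x n) R ∧
        ε < dist (f a) (f b) := by
      intro n
      by_contra hc
      push_neg at hc
      have : EMetric.diam (f '' closedBall (x n) R) ≤ ENNReal.ofReal ε := by
        apply EMetric.diam_le
        rintro _ ⟨a, ha, rfl⟩ _ ⟨b, hb, rfl⟩
        rw [edist_dist]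
        exact ENNReal.ofReal_le_ofReal (hc a b ha hb)
      exact absurd this (not_le.mpr (hd n))
    choose a b ha hb hab using key
    -- dist (a n) x₀ → ∞
    have hdistinf : ∀ t : ℝ, ∀ᶠ n in atTop, t ≤ dist (a n) x₀ := by
      intro t
      filter_upwards [eventually_ge_atTop ⌈t + R⌉₊] with n hn
      have h1 : (t + R : ℝ) ≤ n := Nat.ceil_le.mp hn
      have h2 : dist (x n) x₀ ≤ dist (x n) (a n) + dist (a n) x₀ := dist_triangle _ _ _
      have h3 : dist (x n) (a n) ≤ R := by
        rw [dist_comm]; exact mem_closedBall.mp (ha n)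
      have h4 := hx n
      linarith
    have habd : ∀ n, dist (a n) (b n) ≤ 2 * R := by
      intro n
      calc dist (a n) (b n) ≤ dist (a n) (x n) + dist (x n) (b n) := dist_triangle _ _ _
        _ ≤ R + R := add_le_add (mem_closedBall.mp (ha n)) (by rw [dist_comm]; exact mem_closedBall.mp (hb n))
        _ = 2 * R := by ring
    -- ultrafilter
    let U : Ultrafilter ℕ := Ultrafilter.of atTop
    have hU : (U : Filter ℕ) ≤ atTop := Ultrafilter.of_le _
    obtain ⟨ω, hω⟩ : ∃ ω : HigsonCompactification x₀,
        Tendsto (fun n => higsonIota x₀ (a n)) (U : Filter ℕ) (𝓝 ω) :=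
      ⟨_, (U.map (fun n => higsonIota x₀ (a n))).le_nhds_lim⟩
    have hA : Tendsto (fun n => higsonEvalCLM x₀ (a n)) (U : Filter ℕ)
        (𝓝 (ω : WeakDual ℂ ↥(higsonAlgebra x₀))) := tendsto_subtype_rng.mp hω
    have hdiff : ∀ u : ↥(higsonAlgebra x₀),
        Tendsto (fun n => ((u : X →ᵇ ℂ) (a n) - (u : X →ᵇ ℂ) (b n))) (U : Filter ℕ) (𝓝 0) := by
      intro u
      rw [Metric.tendsto_nhds]
      intro δ hδ
      obtain ⟨t, ht⟩ := higson_slowOsc x₀ (2 * R) (by positivity) u.2 (δ / 2) (by positivity)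
      filter_upwards [hU (hdistinf t)] with n hn
      have := ht (a n) (b n) hn (habd n)
      rw [dist_zero_right, ← dist_eq_norm]
      linarith
    have hB : Tendsto (fun n => higsonEvalCLM x₀ (b n)) (U : Filter ℕ)
        (𝓝 (ω : WeakDual ℂ ↥(higsonAlgebra x₀))) := by
      rw [tendsto_iff_forall_eval_tendsto_topDualPairing]
      intro u
      have h1 : Tendsto (fun n => (u : X →ᵇ ℂ) (a n)) (U : Filter ℕ)
          (𝓝 (topDualPairing ℂ _ (ω : WeakDual ℂ ↥(higsonAlgebra x₀)) u)) :=
        tendsto_iff_forall_eval_tendsto_topDualPairing.mp hA u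
      have h2 := h1.sub (hdiff u)
      simp at h2; exact h2
    have hωb : Tendsto (fun n => higsonIota x₀ (b n)) (U : Filter ℕ) (𝓝 ω) :=
      tendsto_subtype_rng.mpr hB
    have hFa : Tendsto (fun n => f (a n)) (U : Filter ℕ) (𝓝 (F ω)) := by
      exact (((F.continuous.tendsto ω).comp hω).congr fun n => hF (a n))
    have hFb : Tendsto (fun n => f (b n)) (U : Filter ℕ) (𝓝 (F ω)) := by
      exact (((F.continuous.tendsto ω).comp hωb).congr fun n => hF (b n))
    have hdist : Tendsto (fun n => dist (f (a n)) (f (b n))) (U : Filter ℕ) (𝓝 0) := by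
      have := hFa.dist hFb
      rwa [dist_self] at this
    have h5 : ∀ᶠ n in (U : Filter ℕ), dist (f (a n)) (f (b n)) < ε :=
      hdist.eventually_lt_const hε
    obtain ⟨n, hn⟩ := h5.exists
    exact absurd (hab n) (not_lt.mpr hn.le)
  · intro hdv
    let fC : C(X, Z) := ⟨f, hf⟩
    have hmem : ∀ g : C(Z, ℂ),
        ((mkOfCompact g).compContinuous fC) ∈ higsonAlgebra x₀ := by
      intro g
      apply StarSubalgebra.le_topologicalClosure
      apply StarAlgebra.subset_adjoin
      intro R hR ε hε
      obtain ⟨δ, hδ, hgu⟩ := Metric.uniformContinuous_iff.mp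
        (CompactSpace.uniformContinuous_of_continuous g.continuous) ε hε
      obtain ⟨t, ht, H⟩ := hdv R hR (δ / 2) (by positivity)
      refine ⟨t, ht, fun x hx => ?_⟩
      apply EMetric.diam_le
      rintro _ ⟨p, hp, rfl⟩ _ ⟨q, hq, rfl⟩
      have h1 : edist (f p) (f q) ≤ ENNReal.ofReal (δ / 2) :=
        le_trans (EMetric.edist_le_diam_of_mem (Set.mem_image_of_mem f hp) (Set.mem_image_of_mem f hq)) (H x hx)
      have h2 : dist (f p) (f q) < δ := by
        rw [edist_dist, ENNReal.ofReal_le_ofReal_iff (by positivity)] at h1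
        linarith
      have h3 := hgu h2
      show edist (g (f p)) (g (f q)) ≤ ENNReal.ofReal ε
      rw [edist_dist]
      exact ENNReal.ofReal_le_ofReal h3.le
    let ψ : C(Z, ℂ) →⋆ₐ[ℂ] ↥(higsonAlgebra x₀) :=
      { toFun := fun g => ⟨(mkOfCompact g).compContinuous fC, hmem g⟩
        map_one' := Subtype.ext (by ext x; rfl)
        map_mul' := fun g g' => Subtype.ext (by ext x; rfl)
        map_zero' := Subtype.ext (by ext x; rfl)
        map_add' := fun g g' => Subtype.ext (by ext x; rfl)
        commutes' := fun c => Subtype.ext (by ext x; rfl)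
        map_star' := fun g => Subtype.ext (by ext x; rfl) }
    let Φ := WeakDual.CharacterSpace.compContinuousMap ψ
    let e := WeakDual.CharacterSpace.homeoEval Z ℂ
    refine ⟨⟨fun w => e.symm (Φ w), e.symm.continuous.comp Φ.continuous⟩, fun x => ?_⟩
    have hΦ : Φ (higsonIota x₀ x) = e (f x) := by
      apply WeakDual.CharacterSpace.ext
      intro g
      show (WeakDual.CharacterSpace.compContinuousMap ψ (higsonIota x₀ x)) g
        = (WeakDual.CharacterSpace.continuousMapEval Z ℂ (f x)) g
      erw [WeakDual.CharacterSpace.compContinuousMap_apply]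
    show e.symm (Φ (higsonIota x₀ x)) = f x
    rw [hΦ, Homeomorph.symm_apply_apply]
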